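/- Let n, ℓ ≥ 1 be integers and φ a vertex coloring of G_{n,ℓ}. Let a ≥ 1 and k ≥ 0 be integers with a + 4k + 1 ≤ 2n, and suppose that φ(v_i) ∈ φ(V_{i+2k+1}) for every odd i ∈ [a, a+2k] and φ(v_{i+2k+1}) ∈ φ(V_i) for every even i ∈ [a, a+2k]. Then there exists a simple path w_a, w_{a+1}, …, w_{a+4k+1} in G_{n,ℓ} with w_j ∈ V_j for every j ∈ [a, a+4k+1] whose color sequence is a repetition, i.e., φ(w_j) = φ(w_{j+2k+1}) for all j ∈ [a, a+2k]; consequently φ is not nonrepetitive. -/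

import Mathlib

/-- `p 0, p 1, …, p m` is a simple path in `G` (injective, consecutive vertices adjacent). -/
def IsPathSeq {V : Type} (G : SimpleGraph V) (p : ℕ → V) (m : ℕ) : Prop :=
  (∀ i j, i ≤ m → j ≤ m → p i = p j → i = j) ∧ ∀ i < m, G.Adj (p i) (p (i + 1))

/-- A vertex coloring `φ` of `G` is nonrepetitive if there is no simple path
`v₁ v₂ … v₂ᵣ` (`r ≥ 1`) in `G` with `φ(vᵢ) = φ(v_{r+i})` for all `i ∈ {1,…,r}`. -/
def Nonrepetitive {V : Type} (G : SimpleGraph V) (φ : V → ℕ) : Prop :=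
  ∀ r : ℕ, 1 ≤ r → ∀ p : ℕ → V, IsPathSeq G p (2 * r - 1) →
    ∃ i < r, φ (p i) ≠ φ (p (i + r))

/-- `G` is nonrepetitively `ℓ`-choosable: every assignment of color lists of size
at least `ℓ` admits a nonrepetitive coloring from the lists. -/
def ThueChoosable {V : Type} (G : SimpleGraph V) (ℓ : ℕ) : Prop :=
  ∀ L : V → Finset ℕ, (∀ v, ℓ ≤ (L v).card) →
    ∃ φ : V → ℕ, (∀ v, φ v ∈ L v) ∧ Nonrepetitive G φ

/-- The vertex set of the graph `G_{n,ℓ}`: `Sum.inl i` is the vertex `v_{2i+1}`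
(at odd position `2i+1`, for `i = 0,…,n-1`), and `Sum.inr (i, j)` is the vertex
`v_{2i+2}^j` (at even position `2i+2`), where the even positions are blown up
into independent sets of size `(ℓn).choose ℓ`. -/
def GnlVert (n ℓ : ℕ) : Type := Fin n ⊕ Fin n × Fin ((ℓ * n).choose ℓ)

/-- The position (in `{1, …, 2n}`) of a vertex of `G_{n,ℓ}`. -/
def GnlPos {n ℓ : ℕ} : GnlVert n ℓ → ℕ
  | Sum.inl i => 2 * i.val + 1
  | Sum.inr p => 2 * p.1.val + 2

/-- The graph `G_{n,ℓ}`: two vertices are adjacent iff their positions differ by exactly 1. -/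
def Gnl (n ℓ : ℕ) : SimpleGraph (GnlVert n ℓ) where
  Adj u v := GnlPos u = GnlPos v + 1 ∨ GnlPos v = GnlPos u + 1
  symm := by constructor; intro u v h; exact h.symm
  loopless := by constructor; intro u h; rcases h with h | h <;> omega

/-- With `V_p` denoting the set of vertices of `G_{n,ℓ}` at position `p`, suppose
`φ(v_i) ∈ φ(V_{i+2k+1})` for every odd `i ∈ [a, a+2k]` and `φ(v_{i+2k+1}) ∈ φ(V_i)`
for every even `i ∈ [a, a+2k]`, where `a ≥ 1` and `a + 4k + 1 ≤ 2n`.  Then there is a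
simple path `w_a, …, w_{a+4k+1}` in `G_{n,ℓ}` with `w_j ∈ V_j` whose color sequence is
a repetition, and consequently `φ` is not nonrepetitive. -/
theorem stmt4 (n ℓ : ℕ) (hn : 1 ≤ n) (hℓ : 1 ≤ ℓ)
    (φ : GnlVert n ℓ → ℕ) (a k : ℕ) (ha : 1 ≤ a) (hak : a + 4 * k + 1 ≤ 2 * n)
    (hodd : ∀ i, a ≤ i → i ≤ a + 2 * k → Odd i →
      ∀ u : GnlVert n ℓ, GnlPos u = i →
        φ u ∈ φ '' {w : GnlVert n ℓ | GnlPos w = i + 2 * k + 1})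
    (heven : ∀ i, a ≤ i → i ≤ a + 2 * k → Even i →
      ∀ u : GnlVert n ℓ, GnlPos u = i + 2 * k + 1 →
        φ u ∈ φ '' {w : GnlVert n ℓ | GnlPos w = i}) :
    (∃ w : ℕ → GnlVert n ℓ,
        (∀ j, a ≤ j → j ≤ a + 4 * k + 1 → GnlPos (w j) = j) ∧
        (∀ j j', a ≤ j → j ≤ a + 4 * k + 1 → a ≤ j' → j' ≤ a + 4 * k + 1 →
          w j = w j' → j = j') ∧
        (∀ j, a ≤ j → j < a + 4 * k + 1 → (Gnl n ℓ).Adj (w j) (w (j + 1))) ∧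
        (∀ j, a ≤ j → j ≤ a + 2 * k → φ (w j) = φ (w (j + 2 * k + 1)))) ∧
      ¬ Nonrepetitive (Gnl n ℓ) φ := by
  have hn0 : 0 < n := hn
  set f : ℕ → GnlVert n ℓ := fun p => Sum.inl ⟨p / 2 % n, Nat.mod_lt _ hn0⟩ with hf
  have hfpos : ∀ p, Odd p → p ≤ 2 * n → GnlPos (f p) = p := by
    intro p hp hpn
    rw [Nat.odd_iff] at hp
    have h2 : p / 2 < n := by omega
    simp only [hf, GnlPos, Nat.mod_eq_of_lt h2]
    omega
  have hx : ∀ j, ∃ u : GnlVert n ℓ,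
      a ≤ j → j ≤ a + 4 * k + 1 →
        GnlPos u = j ∧ (Odd j → u = f j) ∧
        (Even j → j ≤ a + 2 * k → φ u = φ (f (j + 2 * k + 1))) ∧
        (Even j → a + 2 * k + 1 ≤ j → φ u = φ (f (j - (2 * k + 1)))) := by
    intro j
    by_cases hj1 : a ≤ j ∧ j ≤ a + 4 * k + 1
    · obtain ⟨hja, hjb⟩ := hj1
      rcases Nat.even_or_odd j with hje | hjo
      · have hje' : j % 2 = 0 := Nat.even_iff.mp hje
        by_cases hj2 : j ≤ a + 2 * k
        · have hpos : GnlPos (f (j + 2 * k + 1)) = j + 2 * k + 1 :=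
            hfpos _ (by rw [Nat.odd_iff]; omega) (by omega)
          obtain ⟨u, hu1, hu2⟩ := heven j hja hj2 hje (f (j + 2 * k + 1)) hpos
          refine ⟨u, fun _ _ => ⟨hu1, ?_, fun _ _ => hu2, fun _ h => by omega⟩⟩
          intro ho; rw [Nat.odd_iff] at ho; omega
        · have hia : a ≤ j - (2 * k + 1) := by omega
          have hib : j - (2 * k + 1) ≤ a + 2 * k := by omega
          have hio : Odd (j - (2 * k + 1)) := by rw [Nat.odd_iff]; omega
          have hpos : GnlPos (f (j - (2 * k + 1))) = j - (2 * k + 1) :=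
            hfpos _ hio (by omega)
          obtain ⟨u, hu1, hu2⟩ := hodd _ hia hib hio (f (j - (2 * k + 1))) hpos
          have hu1' : GnlPos u = j := by
            have : j - (2 * k + 1) + 2 * k + 1 = j := by omega
            rw [← this]; exact hu1
          refine ⟨u, fun _ _ => ⟨hu1', ?_, fun _ h => by omega, fun _ _ => hu2⟩⟩
          intro ho; rw [Nat.odd_iff] at ho; omega
      · have hjo' : j % 2 = 1 := Nat.odd_iff.mp hjo
        refine ⟨f j, fun _ _ => ⟨hfpos j hjo (by omega), fun _ => rfl, ?_, ?_⟩⟩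
        · intro he; rw [Nat.even_iff] at he; omega
        · intro he; rw [Nat.even_iff] at he; omega
    · exact ⟨f 1, fun h1 h2 => absurd ⟨h1, h2⟩ hj1⟩
  choose w hw using hx
  have hwpos : ∀ j, a ≤ j → j ≤ a + 4 * k + 1 → GnlPos (w j) = j :=
    fun j h1 h2 => (hw j h1 h2).1
  have hinj : ∀ j j', a ≤ j → j ≤ a + 4 * k + 1 → a ≤ j' → j' ≤ a + 4 * k + 1 →
      w j = w j' → j = j' := by
    intro j j' h1 h2 h3 h4 he
    rw [← hwpos j h1 h2, ← hwpos j' h3 h4, he]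
  have hadj : ∀ j, a ≤ j → j < a + 4 * k + 1 → (Gnl n ℓ).Adj (w j) (w (j + 1)) := by
    intro j h1 h2
    have e1 := hwpos j h1 (by omega)
    have e2 := hwpos (j + 1) (by omega) (by omega)
    exact Or.inr (by omega)
  have hrep : ∀ j, a ≤ j → j ≤ a + 2 * k → φ (w j) = φ (w (j + 2 * k + 1)) := by
    intro j h1 h2
    have hjr : j ≤ a + 4 * k + 1 := by omega
    have hjr2 : j + 2 * k + 1 ≤ a + 4 * k + 1 := by omega
    have hja2 : a ≤ j + 2 * k + 1 := by omega
    obtain ⟨p1, podd, pev1, pev2⟩ := hw j h1 hjr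
    obtain ⟨q1, qodd, qev1, qev2⟩ := hw (j + 2 * k + 1) hja2 hjr2
    rcases Nat.even_or_odd j with hje | hjo
    · have hje' : j % 2 = 0 := Nat.even_iff.mp hje
      rw [pev1 hje h2]
      rw [qodd (by rw [Nat.odd_iff]; omega)]
    · have hjo' : j % 2 = 1 := Nat.odd_iff.mp hjo
      rw [podd hjo]
      rw [qev2 (by rw [Nat.even_iff]; omega) (by omega)]
      congr 2
      omega
  have hnotrep : ¬ Nonrepetitive (Gnl n ℓ) φ := by
    intro hN
    have hpath : IsPathSeq (Gnl n ℓ) (fun i => w (a + i)) (2 * (2 * k + 1) - 1) := by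
      constructor
      · intro i j hi hj he
        have : 2 * (2 * k + 1) - 1 = 4 * k + 1 := by omega
        rw [this] at hi hj
        have := hinj (a + i) (a + j) (by omega) (by omega) (by omega) (by omega) he
        omega
      · intro i hi
        have : 2 * (2 * k + 1) - 1 = 4 * k + 1 := by omega
        rw [this] at hi
        have := hadj (a + i) (by omega) (by omega)
        simpa [show a + i + 1 = a + (i + 1) by omega] using this
    obtain ⟨i, hi, hne⟩ := hN (2 * k + 1) (by omega) (fun i => w (a + i)) hpath
    exact hne (by
      have := hrep (a + i) (by omega) (by omega)
      simpa [show a + i + 2 * k + 1 = a + (i + (2 * k + 1)) by omega] using this)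
  exact ⟨⟨w, hwpos, hinj, hadj, hrep⟩, hnotrep⟩
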